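/- arXiv:1912.11465 — 7 statements merged into one kernel-verified Lean document; each statement's English description precedes it below -/
import Mathlib

section
/- Let $Q$ be an involutory quandle and $a,b,c \in Q$ with $c \rhd a = c \rhd b$. Then for every $z \in Q$: $z^{cab} = z^{abc}$ and $z^{cba} = z^{bac}$. -/
/-- An involutory quandle: `x ▷ x = x`, `(x ▷ y) ▷ y = x`, and right self-distributivity. -/
structure InvQuandle (Q : Type*) where
  act : Q → Q → Q
  idem : ∀ x, act x x = x
  invol : ∀ x y, act (act x y) y = x
  distrib : ∀ x y z, act (act x y) z = act (act x z) (act y z)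

namespace InvQuandle

variable {Q : Type*}

/-- Apply a word (list of quandle elements) to `z` on the right:
`apw R z [y₁,…,y_k] = ((z ▷ y₁) ▷ y₂) ⋯ ▷ y_k`. -/
def apw (R : InvQuandle Q) (z : Q) (w : List Q) : Q := w.foldl R.act z

/-- The word `w` repeated `n` times. -/
def wpow (w : List Q) : ℕ → List Q
  | 0 => []
  | n + 1 => w ++ wpow w n

end InvQuandle

open InvQuandle

/-- If $c ▷ a = c ▷ b$ then $z^{cab} = z^{abc}$ and $z^{cba} = z^{bac}$. -/
theorem stmt5 {Q : Type*} (R : InvQuandle Q) (a b c : Q)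
    (h : R.act c a = R.act c b) (z : Q) :
    R.apw z [c, a, b] = R.apw z [a, b, c] ∧ R.apw z [c, b, a] = R.apw z [b, a, c] := by
  simp only [apw, List.foldl]
  constructor
  · rw [R.distrib z c a, R.distrib _ _ b, h, R.invol]
  · rw [R.distrib z c b, R.distrib _ _ a, ← h, R.invol]
end

section
/- Let $Q$ be an involutory quandle and $a,b,c \in Q$ with $c \rhd a = c \rhd b$. Then for every $z \in Q$ and every word $w \in \{ca, ac, cb, bc\}$ (i.e. $w$ acting as the corresponding two-letter sequence), $z^{wab} = z^{baw}$ and $z^{wba} = z^{abw}$. -/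
open InvQuandle


section Helpers
variable {Q : Type*} (R : InvQuandle Q)

lemma conjr (x y z : Q) :
    R.act (R.act (R.act x y) z) y = R.act x (R.act z y) := by
  rw [R.distrib, R.invol]

lemma hba {a b c : Q} (h : R.act c a = R.act c b) :
    R.act c (R.act b a) = R.act c a := by
  rw [← conjr R c a b]
  nth_rewrite 1 [h]
  rw [R.invol]

lemma e1 {a b c : Q} (h : R.act c a = R.act c b) (z : Q) :
    R.act (R.act (R.act (R.act z c) a) a) b
      = R.act (R.act (R.act (R.act z b) a) c) a := by
  rw [R.invol, conjr R (R.act z b) a c, h, ← R.distrib]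

lemma e2 {a b c : Q} (h : R.act c a = R.act c b) (z : Q) :
    R.act (R.act (R.act (R.act z c) a) b) a
      = R.act (R.act (R.act (R.act z a) b) c) a := by
  rw [conjr R (R.act z c) a b, R.distrib (R.act (R.act z a) b) c a,
    conjr R z a b, ← hba R h, ← R.distrib]

lemma e3 {a b c : Q} (h : R.act c a = R.act c b) (z : Q) :
    R.act (R.act (R.act (R.act z a) c) a) b
      = R.act (R.act (R.act (R.act z b) a) a) c := by
  rw [conjr R z a c, h, ← conjr R z b c, R.invol, R.invol]

lemma e4 {a b c : Q} (h : R.act c a = R.act c b) (z : Q) :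
    R.act (R.act (R.act (R.act z a) c) b) a
      = R.act (R.act (R.act (R.act z a) b) a) c := by
  rw [conjr R z a b, R.distrib (R.act (R.act z a) c) b a,
    conjr R z a c, ← hba R h, ← conjr R z (R.act b a) c, R.invol]

end Helpers

/-- If $c ▷ a = c ▷ b$, then for every word $w ∈ \{ca, ac, cb, bc\}$,
$z^{wab} = z^{baw}$ and $z^{wba} = z^{abw}$. -/
theorem stmt6 {Q : Type*} (R : InvQuandle Q) (a b c : Q)
    (h : R.act c a = R.act c b) (z : Q) (w : List Q)
    (hw : w ∈ [[c, a], [a, c], [c, b], [b, c]]) :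
    R.apw z (w ++ [a, b]) = R.apw z ([b, a] ++ w) ∧
    R.apw z (w ++ [b, a]) = R.apw z ([a, b] ++ w) := by
  simp only [List.mem_cons, List.mem_singleton] at hw
  simp only [apw, List.cons_append, List.nil_append, List.foldl]
  rcases hw with rfl | rfl | rfl | rfl | h'
  · exact ⟨e1 R h z, e2 R h z⟩
  · exact ⟨e3 R h z, e4 R h z⟩
  · exact ⟨e2 R h.symm z, e1 R h.symm z⟩
  · exact ⟨e4 R h.symm z, e3 R h.symm z⟩
  · simp at h'
end

section
/- Let $Q$ be an involutory quandle and $a,b,c \in Q$ with $c \rhd a = c \rhd b$. Then for every $z \in Q$ and every word $w \in \{ca, ac, cb, bc\}$, $z^{w^2 ab} = z^{ab w^2}$ and $z^{w^2 ba} = z^{ba w^2}$, where $w^2$ denotes the word $w$ repeated twice. -/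
open InvQuandle

/-- If $c ▷ a = c ▷ b$, then for every word $w ∈ \{ca, ac, cb, bc\}$,
$z^{w^2 ab} = z^{ab w^2}$ and $z^{w^2 ba} = z^{ba w^2}$. -/
theorem stmt7 {Q : Type*} (R : InvQuandle Q) (a b c : Q)
    (h : R.act c a = R.act c b) (z : Q) (w : List Q)
    (hw : w ∈ [[c, a], [a, c], [c, b], [b, c]]) :
    R.apw z (w ++ w ++ [a, b]) = R.apw z ([a, b] ++ (w ++ w)) ∧
    R.apw z (w ++ w ++ [b, a]) = R.apw z ([b, a] ++ (w ++ w)) := by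
  have conj : ∀ x y w, R.act (R.act (R.act x w) y) w = R.act x (R.act y w) := fun x y w => by
    rw [R.distrib, R.invol]
  obtain ⟨d, hd⟩ : ∃ d, R.act c a = d := ⟨_, rfl⟩
  have hcb : R.act c b = d := h.symm.trans hd
  have hda : R.act d a = c := by rw [← hd]; exact R.invol c a
  have hdb : R.act d b = c := by rw [← hcb]; exact R.invol c b
  have key : ∀ p q : Q, R.act c q = d → R.act d p = c → ∀ x,
      R.act (R.act (R.act (R.act x p) q) c) d = R.act (R.act (R.act (R.act x c) d) p) q := by
    intro p q h1 h2 x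
    have m1 : R.act (R.act (R.act (R.act x p) q) c) q = R.act (R.act x p) d :=
      (conj (R.act x p) c q).trans (by rw [h1])
    have m2 : R.act (R.act (R.act x p) d) c
        = R.act (R.act (R.act (R.act (R.act x p) d) p) d) p := by
      rw [← h2]; exact (conj (R.act (R.act x p) d) d p).symm
    calc R.act (R.act (R.act (R.act x p) q) c) d
        = R.act (R.act (R.act (R.act x p) q) c) (R.act c q) := by rw [h1]
      _ = R.act (R.act (R.act (R.act (R.act (R.act x p) q) c) q) c) q :=
          (conj (R.act (R.act (R.act x p) q) c) c q).symm
      _ = R.act (R.act (R.act (R.act x p) d) c) q := by rw [m1]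
      _ = R.act (R.act (R.act (R.act (R.act (R.act x p) d) p) d) p) q := by rw [m2]
      _ = R.act (R.act (R.act (R.act x (R.act d p)) d) p) q := by rw [conj x d p]
      _ = R.act (R.act (R.act (R.act x c) d) p) q := by rw [h2]
  have inv : ∀ p q : Q,
      (∀ x, R.act (R.act (R.act (R.act x p) q) c) d = R.act (R.act (R.act (R.act x c) d) p) q) →
      ∀ x, R.act (R.act (R.act (R.act x p) q) d) c = R.act (R.act (R.act (R.act x d) c) p) q := by
    intro p q hk x
    have h1 := hk (R.act (R.act x d) c)
    rw [R.invol, R.invol] at h1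
    rw [← h1, R.invol, R.invol]
  have sqca : ∀ x, R.act (R.act (R.act (R.act x c) a) c) a = R.act (R.act x c) d :=
    fun x => (conj (R.act x c) c a).trans (by rw [hd])
  have sqcb : ∀ x, R.act (R.act (R.act (R.act x c) b) c) b = R.act (R.act x c) d :=
    fun x => (conj (R.act x c) c b).trans (by rw [hcb])
  have sqac : ∀ x, R.act (R.act (R.act (R.act x a) c) a) c = R.act (R.act x d) c :=
    fun x => congrArg (fun t => R.act t c) ((conj x c a).trans (by rw [hd]))
  have sqbc : ∀ x, R.act (R.act (R.act (R.act x b) c) b) c = R.act (R.act x d) c :=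
    fun x => congrArg (fun t => R.act t c) ((conj x c b).trans (by rw [hcb]))
  have A := key a b hcb hda
  have B := key b a hd hdb
  have C := inv a b A
  have D := inv b a B
  simp only [List.mem_cons, List.not_mem_nil, or_false] at hw
  rcases hw with rfl | rfl | rfl | rfl
  · constructor
    · simp only [apw, List.cons_append, List.nil_append, List.foldl]
      rw [sqca z, sqca (R.act (R.act z a) b)]
      exact (A z).symm
    · simp only [apw, List.cons_append, List.nil_append, List.foldl]
      rw [sqca z, sqca (R.act (R.act z b) a)]
      exact (B z).symm
  · constructor
    · simp only [apw, List.cons_append, List.nil_append, List.foldl]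
      rw [sqac z, sqac (R.act (R.act z a) b)]
      exact (C z).symm
    · simp only [apw, List.cons_append, List.nil_append, List.foldl]
      rw [sqac z, sqac (R.act (R.act z b) a)]
      exact (D z).symm
  · constructor
    · simp only [apw, List.cons_append, List.nil_append, List.foldl]
      rw [sqcb z, sqcb (R.act (R.act z a) b)]
      exact (A z).symm
    · simp only [apw, List.cons_append, List.nil_append, List.foldl]
      rw [sqcb z, sqcb (R.act (R.act z b) a)]
      exact (B z).symm
  · constructor
    · simp only [apw, List.cons_append, List.nil_append, List.foldl]
      rw [sqbc z, sqbc (R.act (R.act z a) b)]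
      exact (C z).symm
    · simp only [apw, List.cons_append, List.nil_append, List.foldl]
      rw [sqbc z, sqbc (R.act (R.act z b) a)]
      exact (D z).symm
end

section
/- Let $Q$ be an involutory quandle, $a,b,c \in Q$ with $c \rhd a = c \rhd b$, and let $t \geq 0$. Set $X = (ba)^t c$ and $Y = (ba)^{t+1} c$ viewed as words, and let $a^X, b^Y$ denote the corresponding quandle elements (the result of applying the word to $a$ resp. $b$). Then for all $z \in Q$: $z^{b^Y\, a\, a^X} = z^{a^X\, a\, b^Y}$, where each superscript letter acts by $\rhd$. -/
open InvQuandle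


namespace InvQuandle

variable {Q : Type*} (R : InvQuandle Q)

def S (x : Q) : Equiv.Perm Q :=
  ⟨fun z => R.act z x, fun z => R.act z x, fun z => R.invol z x, fun z => R.invol z x⟩

@[simp] lemma S_apply (x z : Q) : R.S x z = R.act z x := rfl

@[simp] lemma S_mul_self (x : Q) : R.S x * R.S x = 1 := by
  ext z; simp [Equiv.Perm.mul_apply, R.invol]

@[simp] lemma S_inv (x : Q) : (R.S x)⁻¹ = R.S x :=
  inv_eq_of_mul_eq_one_right (R.S_mul_self x)

lemma S_act (x y : Q) : R.S (R.act x y) = R.S y * R.S x * R.S y := by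
  ext z
  simp only [Equiv.Perm.mul_apply, S_apply]
  rw [R.distrib, R.invol]

lemma apw_append (z : Q) (w₁ w₂ : List Q) :
    R.apw z (w₁ ++ w₂) = R.apw (R.apw z w₁) w₂ :=
  List.foldl_append

lemma apw_wpow_ba (a b : Q) (n : ℕ) (z : Q) :
    R.apw z (wpow [b, a] n) = ((R.S a * R.S b) ^ n) z := by
  induction n generalizing z with
  | zero => simp [apw, wpow]
  | succ n ih =>
    show R.apw z ([b, a] ++ wpow [b, a] n) = _
    rw [apw_append, ih, pow_succ, Equiv.Perm.mul_apply]
    rfl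

lemma S_k_pow (a b : Q) (n : ℕ) (x : Q) :
    R.S (((R.S a * R.S b) ^ n) x) =
      (R.S a * R.S b) ^ n * R.S x * ((R.S a * R.S b)⁻¹) ^ n := by
  induction n generalizing x with
  | zero => simp
  | succ n ih =>
    have h1 : ((R.S a * R.S b) ^ (n + 1)) x = ((R.S a * R.S b) ^ n) ((R.S a * R.S b) x) := by
      rw [pow_succ]; rfl
    rw [h1, ih]
    have h2 : (R.S a * R.S b) x = R.act (R.act x b) a := rfl
    rw [h2, S_act, S_act]
    simp only [mul_inv_rev, S_inv]
    rw [pow_succ, pow_succ']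
    simp only [mul_assoc]

end InvQuandle

private lemma grp_main {G : Type*} [Group G] (k p sa : G)
    (hp : p * k * p⁻¹ = k⁻¹) (ha : sa * k * sa⁻¹ = k⁻¹) (T : ℤ) :
    (k ^ T * p * k ^ (-T)) * sa * (k ^ (T + 1) * (k⁻¹ * p) * k ^ (-(T + 1))) =
    (k ^ (T + 1) * (k⁻¹ * p) * k ^ (-(T + 1))) * sa * (k ^ T * p * k ^ (-T)) := by
  have hpn : ∀ n : ℤ, p * k ^ n = k ^ (-n) * p := by
    intro n
    have : (p * k * p⁻¹) ^ n = p * k ^ n * p⁻¹ := conj_zpow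
    rw [hp] at this
    have := congrArg (· * p) this.symm
    simpa [mul_assoc, zpow_neg, inv_zpow] using this
  have han : ∀ n : ℤ, sa * k ^ n = k ^ (-n) * sa := by
    intro n
    have : (sa * k * sa⁻¹) ^ n = sa * k ^ n * sa⁻¹ := conj_zpow
    rw [ha] at this
    have := congrArg (· * sa) this.symm
    simpa [mul_assoc, zpow_neg, inv_zpow] using this
  have hpn' : ∀ (n : ℤ) (x : G), p * (k ^ n * x) = k ^ (-n) * (p * x) := by
    intro n x; rw [← mul_assoc, hpn, mul_assoc]
  have han' : ∀ (n : ℤ) (x : G), sa * (k ^ n * x) = k ^ (-n) * (sa * x) := by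
    intro n x; rw [← mul_assoc, han, mul_assoc]
  have hk' : ∀ (m n : ℤ) (x : G), k ^ m * (k ^ n * x) = k ^ (m + n) * x := by
    intro m n x; rw [← mul_assoc, ← zpow_add]
  have hkinv : k⁻¹ = k ^ (-1 : ℤ) := by simp
  rw [hkinv]
  simp only [mul_assoc, hpn, hpn', han, han', hk', ← zpow_add]
  ring_nf

/-- With $X = (ba)^t c$, $Y = (ba)^{t+1} c$, if $c ▷ a = c ▷ b$ then
$z^{b^Y a a^X} = z^{a^X a b^Y}$ for all $z$. -/
theorem stmt9 {Q : Type*} (R : InvQuandle Q) (a b c : Q)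
    (h : R.act c a = R.act c b) (t : ℕ) (z : Q) :
    R.apw z [R.apw b (wpow [b, a] (t + 1) ++ [c]), a, R.apw a (wpow [b, a] t ++ [c])] =
    R.apw z [R.apw a (wpow [b, a] t ++ [c]), a, R.apw b (wpow [b, a] (t + 1) ++ [c])] := by
  set Sa := R.S a with hSa
  set Sb := R.S b with hSb
  set Sc := R.S c with hSc
  set k : Equiv.Perm Q := Sa * Sb with hk
  -- key relation from h
  have key : Sa * Sc * Sa = Sb * Sc * Sb := by
    have := congrArg R.S h
    rwa [R.S_act, R.S_act] at this
  -- Sc commutes with k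
  have hck : Sc * k = k * Sc := by
    calc Sc * k = (Sa * Sa) * (Sc * (Sa * Sb)) := by
          rw [hSa, R.S_mul_self, one_mul, hk]
      _ = Sa * ((Sa * Sc * Sa) * Sb) := by simp only [mul_assoc]
      _ = Sa * ((Sb * Sc * Sb) * Sb) := by rw [key]
      _ = Sa * (Sb * (Sc * (Sb * Sb))) := by simp only [mul_assoc]
      _ = k * Sc := by rw [hSb, R.S_mul_self, mul_one, hk, mul_assoc]
  have hkinv : k⁻¹ = Sb * Sa := by rw [hk, mul_inv_rev, hSa, hSb, R.S_inv, R.S_inv]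
  have hck2 : Sc * k⁻¹ = k⁻¹ * Sc := by
    have := congrArg Inv.inv hck
    simpa [mul_inv_rev, hSc, R.S_inv] using this.symm
  have hckn : ∀ n : ℕ, Sc * k ^ n = k ^ n * Sc := by
    intro n
    induction n with
    | zero => simp
    | succ n ih => rw [pow_succ, ← mul_assoc, ih, mul_assoc, hck, ← mul_assoc]
  have hckn2 : ∀ n : ℕ, Sc * (k⁻¹) ^ n = (k⁻¹) ^ n * Sc := by
    intro n
    induction n with
    | zero => simp
    | succ n ih => rw [pow_succ, ← mul_assoc, ih, mul_assoc, hck2, ← mul_assoc]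
  set p : Equiv.Perm Q := Sc * Sa * Sc with hp_def
  -- p inverts k by conjugation
  have hpinv : p⁻¹ = p := by
    rw [hp_def]; simp [mul_inv_rev, hSa, hSc, R.S_inv, mul_assoc]
  have hpk : p * k * p⁻¹ = k⁻¹ := by
    rw [hpinv, hp_def]
    calc Sc * Sa * Sc * k * (Sc * Sa * Sc)
        = Sc * Sa * (Sc * k) * (Sc * Sa * Sc) := by simp only [mul_assoc]
      _ = Sc * Sa * (k * Sc) * (Sc * Sa * Sc) := by rw [hck]
      _ = Sc * (Sa * (Sa * (Sb * ((Sc * Sc) * (Sa * Sc))))) := by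
          rw [hk]; simp only [mul_assoc]
      _ = Sc * (Sb * (Sa * Sc)) := by
          rw [hSc, R.S_mul_self, one_mul, hSa, ← mul_assoc Sa Sa, R.S_mul_self, one_mul]
      _ = (Sc * k⁻¹) * Sc := by rw [hkinv]; simp only [mul_assoc]
      _ = k⁻¹ * (Sc * Sc) := by rw [hck2]; simp only [mul_assoc]
      _ = k⁻¹ := by rw [hSc, R.S_mul_self, mul_one]
  have hak : Sa * k * Sa⁻¹ = k⁻¹ := by
    have saa : Sa * Sa = 1 := R.S_mul_self a
    have hainv : Sa⁻¹ = Sa := R.S_inv a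
    rw [hainv, hk, hkinv, ← mul_assoc Sa Sa Sb, saa, one_mul]
  -- the q element
  have hq : Sc * Sb * Sc = k⁻¹ * p := by
    rw [hkinv, hp_def]
    calc Sc * Sb * Sc = (Sb * Sb) * (Sc * Sb * Sc) := by rw [hSb, R.S_mul_self, one_mul]
      _ = Sb * ((Sb * Sc * Sb) * Sc) := by simp only [mul_assoc]
      _ = Sb * ((Sa * Sc * Sa) * Sc) := by rw [key]
      _ = Sb * Sa * (Sc * Sa * Sc) := by simp only [mul_assoc]
  -- identify the two word values
  have haX : R.apw a (wpow [b, a] t ++ [c]) = R.act ((k ^ t) a) c := by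
    rw [R.apw_append, R.apw_wpow_ba]; rfl
  have hbY : R.apw b (wpow [b, a] (t + 1) ++ [c]) = R.act ((k ^ (t + 1)) b) c := by
    rw [R.apw_append, R.apw_wpow_ba]; rfl
  have SaX : R.S (R.apw a (wpow [b, a] t ++ [c])) = k ^ t * p * (k⁻¹) ^ t := by
    rw [haX, R.S_act, R.S_k_pow, hp_def]
    rw [← hSa, ← hSb, ← hSc, ← hk]
    calc Sc * (k ^ t * Sa * k⁻¹ ^ t) * Sc
        = (Sc * k ^ t) * (Sa * (k⁻¹ ^ t * Sc)) := by simp only [mul_assoc]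
      _ = (k ^ t * Sc) * (Sa * (Sc * k⁻¹ ^ t)) := by rw [hckn, hckn2]
      _ = k ^ t * (Sc * Sa * Sc) * k⁻¹ ^ t := by simp only [mul_assoc]
  have SbY : R.S (R.apw b (wpow [b, a] (t + 1) ++ [c])) = k ^ (t + 1) * (k⁻¹ * p) * (k⁻¹) ^ (t + 1) := by
    rw [hbY, R.S_act, R.S_k_pow]
    rw [← hSa, ← hSb, ← hSc, ← hk, ← hq]
    calc Sc * (k ^ (t + 1) * Sb * k⁻¹ ^ (t + 1)) * Sc
        = (Sc * k ^ (t + 1)) * (Sb * (k⁻¹ ^ (t + 1) * Sc)) := by simp only [mul_assoc]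
      _ = (k ^ (t + 1) * Sc) * (Sb * (Sc * k⁻¹ ^ (t + 1))) := by rw [hckn, hckn2]
      _ = k ^ (t + 1) * (Sc * Sb * Sc) * k⁻¹ ^ (t + 1) := by simp only [mul_assoc]
  -- reduce the goal to a permutation identity
  have goal_eq : ∀ (u v : Q),
      R.apw z [u, a, v] = (R.S v * (Sa * R.S u)) z := fun u v => rfl
  rw [goal_eq, goal_eq]
  have main :
      R.S (R.apw a (wpow [b, a] t ++ [c])) * (Sa *
        R.S (R.apw b (wpow [b, a] (t + 1) ++ [c]))) =
      R.S (R.apw b (wpow [b, a] (t + 1) ++ [c])) * (Sa *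
        R.S (R.apw a (wpow [b, a] t ++ [c]))) := by
    rw [SaX, SbY]
    have e1 : (k : Equiv.Perm Q) ^ t = k ^ (t : ℤ) := (zpow_natCast k t).symm
    have e2 : (k⁻¹ : Equiv.Perm Q) ^ t = k ^ (-(t : ℤ)) := by
      rw [inv_pow, ← zpow_natCast, ← zpow_neg]
    have e3 : (k : Equiv.Perm Q) ^ (t + 1) = k ^ ((t : ℤ) + 1) := by
      rw [← zpow_natCast]; norm_cast
    have e4 : (k⁻¹ : Equiv.Perm Q) ^ (t + 1) = k ^ (-((t : ℤ) + 1)) := by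
      rw [inv_pow, ← zpow_natCast, ← zpow_neg]; norm_cast
    rw [e1, e2, e3, e4]
    have := grp_main k p Sa hpk hak (t : ℤ)
    simp only [mul_assoc] at this ⊢
    exact this
  rw [main]
end

section
/- Let $Q$ be an involutory quandle, $a,b,c \in Q$ with $c \rhd a = c \rhd b$, and $t \geq 0$. Set $X = (ba)^t c$ (as a word) and let $a^X, b^X$ be the corresponding elements. Then for all $z \in Q$: $z^{b^X\, a\, a^X} = z^{a^X\, a\, b^X}$. -/
open InvQuandle

/-- Right translation by `y` as a permutation (it is an involution). -/
def Strans {Q : Type*} (R : InvQuandle Q) (y : Q) : Equiv.Perm Q where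
  toFun z := R.act z y
  invFun z := R.act z y
  left_inv z := R.invol z y
  right_inv z := R.invol z y

namespace InvQuandle

variable {Q : Type*} (R : InvQuandle Q)

lemma Strans_apply (y z : Q) : Strans R y z = R.act z y := rfl

lemma Strans_sq (y : Q) : Strans R y * Strans R y = 1 :=
  Equiv.ext fun z => R.invol z y

lemma Strans_inv (y : Q) : (Strans R y)⁻¹ = Strans R y :=
  Equiv.ext fun _ => rfl

lemma Strans_conj (x y : Q) :
    Strans R (R.act x y) = Strans R y * Strans R x * Strans R y := by
  refine Equiv.ext fun z => ?_
  simp only [Equiv.Perm.mul_apply, Strans_apply]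
  rw [R.distrib, R.invol]

lemma wpow_succ' (w : List Q) (n : ℕ) : wpow w (n + 1) = wpow w n ++ w := by
  induction n with
  | zero => simp [wpow]
  | succ n ih =>
    calc wpow w (n + 2) = w ++ wpow w (n + 1) := rfl
      _ = w ++ (wpow w n ++ w) := by rw [ih]
      _ = (w ++ wpow w n) ++ w := (List.append_assoc ..).symm
      _ = wpow w (n + 1) ++ w := rfl

lemma Strans_apw_wpow (a b : Q) : ∀ (n : ℕ) (x : Q),
    Strans R (R.apw x (wpow [b, a] n)) =
      (Strans R a * Strans R b) ^ n * Strans R x * ((Strans R a * Strans R b) ^ n)⁻¹ := by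
  intro n
  induction n with
  | zero => intro x; simp [wpow, apw]
  | succ n ih =>
    intro x
    rw [wpow_succ', apw_append]
    have h1 : R.apw (R.apw x (wpow [b, a] n)) [b, a] =
        R.act (R.act (R.apw x (wpow [b, a] n)) b) a := rfl
    rw [h1, Strans_conj, Strans_conj, ih, pow_succ', mul_inv_rev, mul_inv_rev,
      Strans_inv, Strans_inv]
    simp only [mul_assoc]

end InvQuandle

/-- Core group identity: if `p, q, m` are involutions with `p*q = v`, `q*p = v⁻¹`
and `m` inverts `v` by conjugation, then `p*m*q = q*m*p`. -/
lemma grp_core {G : Type*} [Group G] (p q m v : G)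
    (hp : p * p = 1) (hq : q * q = 1) (hm : m * m = 1)
    (hpq : p * q = v) (hqp : q * p = v⁻¹) (hmv : m * v * m = v⁻¹) :
    p * m * q = q * m * p := by
  have key : q * (p * m * q) * p = q * (q * m * p) * p := by
    have lhs : q * (p * m * q) * p = m := by
      calc q * (p * m * q) * p = (q * p) * m * (q * p) := by simp only [mul_assoc]
        _ = v⁻¹ * m * v⁻¹ := by rw [hqp]
        _ = (m * v * m) * m * (m * v * m) := by rw [← hmv]
        _ = m * v * (m * m) * (m * v * m) := by simp only [mul_assoc]
        _ = m * v * (m * v * m) := by rw [hm, mul_one]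
        _ = m * v * v⁻¹ := by rw [hmv]
        _ = m := by rw [mul_assoc, mul_inv_cancel, mul_one]
    have rhs : q * (q * m * p) * p = m := by
      calc q * (q * m * p) * p = (q * q) * m * (p * p) := by simp only [mul_assoc]
        _ = m := by rw [hq, hp, one_mul, mul_one]
    rw [lhs, rhs]
  exact mul_left_cancel (mul_right_cancel key)

/-- The main group-theoretic computation. -/
lemma grp_main_s10 {G : Type*} [Group G] (sa sb sc : G) (t : ℕ)
    (ia : sa * sa = 1) (ib : sb * sb = 1) (ic : sc * sc = 1)
    (hc : sa * sc * sa = sb * sc * sb) :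
    (sc * ((sa * sb) ^ t * sa * ((sa * sb) ^ t)⁻¹) * sc) *
      (sa * (sc * ((sa * sb) ^ t * sb * ((sa * sb) ^ t)⁻¹) * sc)) =
    (sc * ((sa * sb) ^ t * sb * ((sa * sb) ^ t)⁻¹) * sc) *
      (sa * (sc * ((sa * sb) ^ t * sa * ((sa * sb) ^ t)⁻¹) * sc)) := by
  set v := sa * sb with hv
  have comm : sc * v = v * sc := by
    calc sc * (sa * sb) = (sa * sa) * (sc * (sa * sb)) := by rw [ia, one_mul]
      _ = sa * (sa * sc * sa) * sb := by simp only [mul_assoc]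
      _ = sa * (sb * sc * sb) * sb := by rw [hc]
      _ = (sa * sb) * sc * (sb * sb) := by simp only [mul_assoc]
      _ = (sa * sb) * sc := by rw [ib, mul_one]
  have hcomm : Commute sc v := comm
  have vinv : sb * sa = v⁻¹ := by
    have hvv : v * (sb * sa) = 1 := by
      calc v * (sb * sa) = sa * (sb * sb) * sa := by rw [hv]; simp only [mul_assoc]
        _ = sa * sa := by rw [ib, mul_one]
        _ = 1 := ia
    exact (inv_eq_of_mul_eq_one_right hvv).symm
  have scvsc : sc * v * sc = v := by rw [comm, mul_assoc, ic, mul_one]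
  have commi : sc * v⁻¹ = v⁻¹ * sc := hcomm.inv_right.eq
  have commvt : v * v ^ t = v ^ t * v := (Commute.self_pow v t).eq
  have cvi : v⁻¹ * v ^ t = v ^ t * v⁻¹ := ((Commute.self_pow v t).inv_left).eq
  set p : G := sc * sa * sc with hpdef
  set m : G := (v ^ t)⁻¹ * p * v ^ t with hmdef
  have hp2 : p * p = 1 := by
    calc p * p = sc * sa * (sc * sc) * sa * sc := by rw [hpdef]; simp only [mul_assoc]
      _ = sc * sa * sa * sc := by rw [ic, mul_one]
      _ = sc * (sa * sa) * sc := by simp only [mul_assoc]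
      _ = 1 := by rw [ia, mul_one, ic]
  have hm : m * m = 1 := by
    calc m * m = (v ^ t)⁻¹ * (p * (v ^ t * (v ^ t)⁻¹) * p) * v ^ t := by
          rw [hmdef]; simp only [mul_assoc]
      _ = (v ^ t)⁻¹ * (p * p) * v ^ t := by rw [mul_inv_cancel, mul_one]
      _ = (v ^ t)⁻¹ * v ^ t := by rw [hp2, mul_one]
      _ = 1 := inv_mul_cancel _
  have vtv : v ^ t * v * (v ^ t)⁻¹ = v := by
    rw [← commvt, mul_assoc, mul_inv_cancel, mul_one]
  have pvp : p * v * p = v⁻¹ := by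
    calc p * v * p = sc * sa * (sc * v * sc) * sa * sc := by
          rw [hpdef]; simp only [mul_assoc]
      _ = sc * sa * v * sa * sc := by rw [scvsc]
      _ = sc * (sa * sa) * (sb * sa) * sc := by rw [hv]; simp only [mul_assoc]
      _ = sc * (sb * sa) * sc := by rw [ia, mul_one]
      _ = sc * v⁻¹ * sc := by rw [vinv]
      _ = v⁻¹ * (sc * sc) := by rw [commi, mul_assoc]
      _ = v⁻¹ := by rw [ic, mul_one]
  have hmv : m * v * m = v⁻¹ := by
    calc m * v * m = (v ^ t)⁻¹ * (p * (v ^ t * v * (v ^ t)⁻¹) * p) * v ^ t := by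
          rw [hmdef]; simp only [mul_assoc]
      _ = (v ^ t)⁻¹ * (p * v * p) * v ^ t := by rw [vtv]
      _ = (v ^ t)⁻¹ * v⁻¹ * v ^ t := by rw [pvp]
      _ = (v ^ t)⁻¹ * (v ^ t * v⁻¹) := by rw [mul_assoc, cvi]
      _ = v⁻¹ := by rw [← mul_assoc, inv_mul_cancel, one_mul]
  have core : sa * m * sb = sb * m * sa :=
    grp_core sa sb m v ia ib hm hv.symm vinv hmv
  calc (sc * (v ^ t * sa * (v ^ t)⁻¹) * sc) *
        (sa * (sc * (v ^ t * sb * (v ^ t)⁻¹) * sc))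
      = sc * v ^ t * (sa * ((v ^ t)⁻¹ * (sc * sa * sc) * v ^ t) * sb) *
          ((v ^ t)⁻¹ * sc) := by simp only [mul_assoc]
    _ = sc * v ^ t * (sa * m * sb) * ((v ^ t)⁻¹ * sc) := by rw [hmdef, hpdef]
    _ = sc * v ^ t * (sb * m * sa) * ((v ^ t)⁻¹ * sc) := by rw [core]
    _ = sc * v ^ t * (sb * ((v ^ t)⁻¹ * (sc * sa * sc) * v ^ t) * sa) *
          ((v ^ t)⁻¹ * sc) := by rw [hmdef, hpdef]
    _ = (sc * (v ^ t * sb * (v ^ t)⁻¹) * sc) *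
          (sa * (sc * (v ^ t * sa * (v ^ t)⁻¹) * sc)) := by simp only [mul_assoc]

/-- With $X = (ba)^t c$, if $c ▷ a = c ▷ b$ then
$z^{b^X a a^X} = z^{a^X a b^X}$ for all $z$. -/
theorem stmt10 {Q : Type*} (R : InvQuandle Q) (a b c : Q)
    (h : R.act c a = R.act c b) (t : ℕ) (z : Q) :
    R.apw z [R.apw b (wpow [b, a] t ++ [c]), a, R.apw a (wpow [b, a] t ++ [c])] =
    R.apw z [R.apw a (wpow [b, a] t ++ [c]), a, R.apw b (wpow [b, a] t ++ [c])] := by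
  set sa := Strans R a with hsa
  set sb := Strans R b with hsb
  set sc := Strans R c with hsc
  have hc : sa * sc * sa = sb * sc * sb := by
    have hh := congrArg (Strans R) h
    rwa [Strans_conj, Strans_conj] at hh
  have SA : Strans R (R.apw a (wpow [b, a] t ++ [c])) =
      sc * ((sa * sb) ^ t * sa * ((sa * sb) ^ t)⁻¹) * sc := by
    rw [R.apw_append]
    have h1 : R.apw (R.apw a (wpow [b, a] t)) [c] =
        R.act (R.apw a (wpow [b, a] t)) c := rfl
    rw [h1, Strans_conj, R.Strans_apw_wpow]
  have SB : Strans R (R.apw b (wpow [b, a] t ++ [c])) =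
      sc * ((sa * sb) ^ t * sb * ((sa * sb) ^ t)⁻¹) * sc := by
    rw [R.apw_append]
    have h1 : R.apw (R.apw b (wpow [b, a] t)) [c] =
        R.act (R.apw b (wpow [b, a] t)) c := rfl
    rw [h1, Strans_conj, R.Strans_apw_wpow]
  have mainEq : Strans R (R.apw a (wpow [b, a] t ++ [c])) *
        (sa * Strans R (R.apw b (wpow [b, a] t ++ [c]))) =
      Strans R (R.apw b (wpow [b, a] t ++ [c])) *
        (sa * Strans R (R.apw a (wpow [b, a] t ++ [c]))) := by
    rw [SA, SB]
    exact grp_main_s10 sa sb sc t (R.Strans_sq a) (R.Strans_sq b) (R.Strans_sq c) hc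
  calc R.apw z [R.apw b (wpow [b, a] t ++ [c]), a, R.apw a (wpow [b, a] t ++ [c])]
      = (Strans R (R.apw a (wpow [b, a] t ++ [c])) *
          (sa * Strans R (R.apw b (wpow [b, a] t ++ [c])))) z := rfl
    _ = (Strans R (R.apw b (wpow [b, a] t ++ [c])) *
          (sa * Strans R (R.apw a (wpow [b, a] t ++ [c])))) z := by rw [mainEq]
    _ = R.apw z [R.apw a (wpow [b, a] t ++ [c]), a, R.apw b (wpow [b, a] t ++ [c])] := rfl
end

section
/- Let $Q$ be an involutory quandle, $a,b,c \in Q$ with $c \rhd a = c \rhd b$. Then for all $i, j \geq 0$: $a^{(ca)^i (ba)^j c} = a^{(ca)^i c (ba)^j}$ (relation $\alpha_{i,j}$). -/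
open InvQuandle

/-- relation $α_{i,j}$: if $c ▷ a = c ▷ b$ then
$a^{(ca)^i (ba)^j c} = a^{(ca)^i c (ba)^j}$. -/
theorem stmt12 {Q : Type*} (R : InvQuandle Q) (a b c : Q)
    (h : R.act c a = R.act c b) (i j : ℕ) :
    R.apw a (wpow [c, a] i ++ wpow [b, a] j ++ [c]) =
    R.apw a (wpow [c, a] i ++ [c] ++ wpow [b, a] j) := by
  have key : ∀ z : Q, R.act (R.act (R.act z b) a) c = R.act (R.act (R.act z c) b) a := by
    intro z
    rw [R.distrib z c b, ← h, R.distrib _ (R.act c a) a, R.invol c a]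
  have comm : ∀ (n : ℕ) (z : Q),
      R.act (R.apw z (wpow [b, a] n)) c = R.apw (R.act z c) (wpow [b, a] n) := by
    intro n
    induction n with
    | zero => intro z; rfl
    | succ m ih =>
      intro z
      show R.act (R.apw z ([b, a] ++ wpow [b, a] m)) c
          = R.apw (R.act z c) ([b, a] ++ wpow [b, a] m)
      simp only [apw, List.foldl_append, List.foldl_cons, List.foldl_nil]
      have := ih (R.act (R.act z b) a)
      simp only [apw] at this
      rw [this, key]
  simp only [apw, List.foldl_append, List.foldl_cons, List.foldl_nil]
  exact comm j _
end

section
/- Let $Q$ be an involutory quandle, $a,b \in Q$, and $m \geq 0$, $q \geq 1$ with $q$ odd. If $a^{(ca)^q} = b^{(ab)^m}$ for some $c \in Q$, then $a^{(ab)^m} = b^{(ac)^q}$; similarly if $a^{(ac)^q} = b^{(ab)^m}$ then $a^{(ab)^m} = b^{(ca)^q}$. -/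
open InvQuandle

/- Auxiliary lemmas -/

lemma apw_pair {Q : Type*} (R : InvQuandle Q) (x y : Q) :
    ∀ (n : ℕ) (z : Q), R.apw z (wpow [x, y] n) = (fun t => R.act (R.act t x) y)^[n] z := by
  intro n
  induction n with
  | zero => intro z; rfl
  | succ n ih =>
    intro z
    rw [Function.iterate_succ_apply]
    rw [← ih]
    rfl

lemma key_lemma {Q : Type*} (R : InvQuandle Q) (a b c : Q) (h : R.act c a = R.act c b) :
    ∀ z, R.act (R.act (R.act z a) c) a = R.act (R.act (R.act z b) c) b := by
  intro z
  have h1 := R.distrib (R.act z a) c a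
  have h2 := R.distrib (R.act z b) c b
  rw [R.invol] at h1 h2
  rw [h1, h2, h]

-- BAC = CBA
lemma key2_lemma {Q : Type*} (R : InvQuandle Q) (a b c : Q) (h : R.act c a = R.act c b) :
    ∀ z, R.act (R.act (R.act z c) a) b = R.act (R.act (R.act z a) b) c := by
  intro z
  calc R.act (R.act (R.act z c) a) b
      = R.act (R.act (R.act (R.act (R.act z a) a) c) a) b := by rw [R.invol]
    _ = R.act (R.act (R.act (R.act (R.act z a) b) c) b) b := by
        rw [key_lemma R a b c h (R.act z a)]
    _ = R.act (R.act (R.act z a) b) c := by rw [R.invol]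

-- ABC = CAB
lemma key3_lemma {Q : Type*} (R : InvQuandle Q) (a b c : Q) (h : R.act c a = R.act c b) :
    ∀ z, R.act (R.act (R.act z c) b) a = R.act (R.act (R.act z b) a) c := by
  intro z
  calc R.act (R.act (R.act z c) b) a
      = R.act (R.act (R.act (R.act (R.act z b) b) c) b) a := by rw [R.invol]
    _ = R.act (R.act (R.act (R.act (R.act z b) a) c) a) a := by
        rw [key_lemma R a b c h (R.act z b)]
    _ = R.act (R.act (R.act z b) a) c := by rw [R.invol]

lemma comm_iterate {Q : Type*} (f p p' : Q → Q)
    (base : ∀ z, f (p z) = p' (f z))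
    (step : ∀ z, f (f (p' z)) = p' (f (f z))) :
    ∀ (k : ℕ) (z : Q), f^[2*k+1] (p z) = p' (f^[2*k+1] z) := by
  intro k
  induction k with
  | zero => intro z; simpa using base z
  | succ k ih =>
    intro z
    have e1 : ∀ x : Q, f^[2*(k+1)+1] x = f (f (f^[2*k+1] x)) := by
      intro x
      have h2 : 2*(k+1)+1 = (2*k+1) + 1 + 1 := by ring
      rw [h2, Function.iterate_succ_apply', Function.iterate_succ_apply']
    rw [e1, e1, ih z, step]

lemma comm_full {Q : Type*} (F p p' : Q → Q)
    (hc : ∀ z, F (p z) = p' (F z)) :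
    ∀ (m : ℕ) (z : Q), F (p^[m] z) = p'^[m] (F z) := by
  intro m
  induction m with
  | zero => intro z; rfl
  | succ m ih =>
    intro z
    rw [Function.iterate_succ_apply p, Function.iterate_succ_apply p', ih, hc]

lemma main_half {Q : Type*} (G G' P P' : Q → Q)
    (hGG' : ∀ z, G (G' z) = z) (hG'G : ∀ z, G' (G z) = z)
    (hP'P : ∀ z, P' (P z) = z)
    (hcomm : ∀ z, G (P z) = P' (G z))
    (a b : Q) (hyp : G a = P b) : P a = G' b := by
  have ha : a = G' (P b) := by rw [← hyp, hG'G]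
  have hb : G (P a) = b := by rw [ha, hcomm, hGG', hP'P]
  rw [← hb, hG'G]

/-- for $q$ odd, if $c ▷ a = c ▷ b$ and $a^{(ca)^q} = b^{(ab)^m}$ then
$a^{(ab)^m} = b^{(ac)^q}$; similarly if $a^{(ac)^q} = b^{(ab)^m}$ then
$a^{(ab)^m} = b^{(ca)^q}$. -/
theorem stmt17 {Q : Type*} (R : InvQuandle Q) (a b c : Q) (q m : ℕ) (hq : 1 ≤ q)
    (hodd : Odd q) (h : R.act c a = R.act c b) :
    (R.apw a (wpow [c, a] q) = R.apw b (wpow [a, b] m) →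
      R.apw a (wpow [a, b] m) = R.apw b (wpow [a, c] q)) ∧
    (R.apw a (wpow [a, c] q) = R.apw b (wpow [a, b] m) →
      R.apw a (wpow [a, b] m) = R.apw b (wpow [c, a] q)) := by
  obtain ⟨k, hk⟩ := hodd
  -- the four basic maps
  set g : Q → Q := fun t => R.act (R.act t c) a with hg    -- "AC"
  set g' : Q → Q := fun t => R.act (R.act t a) c with hg'  -- "CA"
  set p : Q → Q := fun t => R.act (R.act t a) b with hp    -- "BA"
  set p' : Q → Q := fun t => R.act (R.act t b) a with hp'  -- "AB"
  have key2 := key2_lemma R a b c h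
  have key3 := key3_lemma R a b c h
  -- inverses
  have hgg' : ∀ z, g (g' z) = z := by
    intro z; simp only [hg, hg']; rw [R.invol, R.invol]
  have hg'g : ∀ z, g' (g z) = z := by
    intro z; simp only [hg, hg']; rw [R.invol, R.invol]
  have hp'p : ∀ z, p' (p z) = z := by
    intro z; simp only [hp, hp']; rw [R.invol, R.invol]
  -- base commutations
  have base_g : ∀ z, g (p z) = p' (g z) := by
    intro z
    simp only [hg, hp, hp']
    rw [key2 z]
  have base_g' : ∀ z, g' (p z) = p' (g' z) := by
    intro z
    simp only [hg', hp, hp']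
    rw [key3 (R.act z a)]
  -- step commutations
  have step_g : ∀ z, g (g (p' z)) = p' (g (g z)) := by
    intro z
    simp only [hg, hp']
    rw [← key3 z, R.invol (R.act (R.act z c) b) a,
        key2 (R.act (R.act z c) a), R.invol (R.act z c) a]
  have step_g' : ∀ z, g' (g' (p' z)) = p' (g' (g' z)) := by
    intro z
    simp only [hg', hp']
    rw [R.invol (R.act z b) a, key3 (R.act (R.act (R.act z a) c) a),
        key2 (R.act z a), R.invol z a]
  -- odd-power commutations
  have comm_g : ∀ z, g^[q] (p z) = p' (g^[q] z) := by
    intro z; rw [hk]; exact comm_iterate g p p' base_g step_g k z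
  have comm_g' : ∀ z, g'^[q] (p z) = p' (g'^[q] z) := by
    intro z; rw [hk]; exact comm_iterate g' p p' base_g' step_g' k z
  -- full commutations
  have full_g : ∀ z, g^[q] (p^[m] z) = p'^[m] (g^[q] z) := comm_full g^[q] p p' comm_g m
  have full_g' : ∀ z, g'^[q] (p^[m] z) = p'^[m] (g'^[q] z) := comm_full g'^[q] p p' comm_g' m
  constructor
  · intro hyp
    rw [apw_pair R c a q a, apw_pair R a b m b] at hyp
    rw [apw_pair R a b m a, apw_pair R a c q b]
    simp only [← hg, ← hg', ← hp, ← hp'] at hyp ⊢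
    exact main_half g^[q] g'^[q] p^[m] p'^[m]
      (fun z => (Function.LeftInverse.iterate hgg' q) z)
      (fun z => (Function.LeftInverse.iterate hg'g q) z)
      (fun z => (Function.LeftInverse.iterate hp'p m) z)
      full_g a b hyp
  · intro hyp
    rw [apw_pair R a c q a, apw_pair R a b m b] at hyp
    rw [apw_pair R a b m a, apw_pair R c a q b]
    simp only [← hg, ← hg', ← hp, ← hp'] at hyp ⊢
    exact main_half g'^[q] g^[q] p^[m] p'^[m]
      (fun z => (Function.LeftInverse.iterate hg'g q) z)
      (fun z => (Function.LeftInverse.iterate hgg' q) z)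
      (fun z => (Function.LeftInverse.iterate hp'p m) z)
      full_g' a b hyp
end
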